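/- arXiv:math/0408150 — 2 statements merged into one kernel-verified Lean document; each statement's English description precedes it below -/
import Mathlib

section
/- Let q ≥ 0 and M > 0. There exists a constant C > 0 such that for all t > 0 and all w ≤ 0: t^{−1/2} ∫₀^t (t−s)^{−1/2} (1+s)^{−1/2} e^{−(w − q(t−s))²/(Mt)} ds ≤ C (1+t)^{−1/2} e^{−w²/(Mt)}. -/
open MeasureTheory Set

section aux

open Real Filter intervalIntegral

private lemma rpow_neg_half_eq (x : ℝ) (hx : 0 ≤ x) : x ^ (-(1/2:ℝ)) = (Real.sqrt x)⁻¹ := by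
  rw [Real.rpow_neg hx, Real.sqrt_eq_rpow]

private lemma arctan_le_self' {x : ℝ} (hx : 0 ≤ x) : Real.arctan x ≤ x := by
  have h0 : 0 ≤ Real.arctan x := by
    rw [← Real.arctan_zero]
    exact Real.arctan_strictMono.monotone hx
  calc Real.arctan x ≤ Real.tan (Real.arctan x) :=
        Real.le_tan h0 (Real.arctan_lt_pi_div_two x)
    _ = x := Real.tan_arctan x

private lemma hasDerivAt_myF {t : ℝ} (ht : 0 < t) {s : ℝ} (hs0 : -1 < s) (hst : s < t) :
    HasDerivAt (fun s => 2 * Real.arctan (Real.sqrt ((1+s)/(t-s))))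
      ((t-s) ^ (-(1/2:ℝ)) * (1+s) ^ (-(1/2:ℝ))) s := by
  have h1 : 0 < 1 + s := by linarith
  have h2 : 0 < t - s := by linarith
  have hu : HasDerivAt (fun s : ℝ => (1+s)/(t-s)) ((1+t)/(t-s)^2) s := by
    have h := ((hasDerivAt_id s).const_add 1).div ((hasDerivAt_id s).const_sub t) h2.ne'
    refine h.congr_deriv ?_
    simp only [id]
    field_simp
    ring
  have hupos : 0 < (1+s)/(t-s) := div_pos h1 h2
  have hs := hu.sqrt hupos.ne'
  have h := (hs.arctan).const_mul 2
  refine h.congr_deriv ?_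
  have e2 : Real.sqrt ((1+s)/(t-s)) ^ 2 = (1+s)/(t-s) := Real.sq_sqrt hupos.le
  have e1 : Real.sqrt ((1+s)/(t-s)) = Real.sqrt (1+s) / Real.sqrt (t-s) :=
    Real.sqrt_div h1.le _
  have p1 : 0 < Real.sqrt (1+s) := Real.sqrt_pos.2 h1
  have p2 : 0 < Real.sqrt (t-s) := Real.sqrt_pos.2 h2
  have q1 : Real.sqrt (1+s) ^ 2 = 1 + s := Real.sq_sqrt h1.le
  have q2 : Real.sqrt (t-s) ^ 2 = t - s := Real.sq_sqrt h2.le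
  rw [rpow_neg_half_eq _ h2.le, rpow_neg_half_eq _ h1.le, e2, e1]
  field_simp
  linear_combination (1+t) * q2

private lemma integrableOn_g {t : ℝ} (ht : 0 < t) :
    IntegrableOn (fun s => (t-s) ^ (-(1/2:ℝ)) * (1+s) ^ (-(1/2:ℝ))) (Ioo (0:ℝ) t) := by
  have hint : IntervalIntegrable (fun s : ℝ => (t-s) ^ (-(1/2:ℝ))) volume 0 t := by
    have h := (intervalIntegral.intervalIntegrable_rpow' (a := 0) (b := t)
      (by norm_num : (-1:ℝ) < -(1/2))).comp_sub_left t
    simpa using h.symm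
  have hmaj : IntegrableOn (fun s : ℝ => (t-s) ^ (-(1/2:ℝ))) (Ioo (0:ℝ) t) :=
    ((intervalIntegrable_iff_integrableOn_Ioc_of_le ht.le).mp hint).mono_set Ioo_subset_Ioc_self
  refine hmaj.integrable.mono ?_ ?_
  · apply Measurable.aestronglyMeasurable
    fun_prop
  · filter_upwards [ae_restrict_mem measurableSet_Ioo] with s hs
    have h1 : (0:ℝ) < 1 + s := by linarith [hs.1]
    have h2 : (0:ℝ) < t - s := by linarith [hs.2]
    have hb : (1+s) ^ (-(1/2:ℝ)) ≤ 1 :=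
      Real.rpow_le_one_of_one_le_of_nonpos (by linarith [hs.1]) (by norm_num)
    have hnn : (0:ℝ) ≤ (t-s) ^ (-(1/2:ℝ)) := Real.rpow_nonneg h2.le _
    have hnn' : (0:ℝ) ≤ (1+s) ^ (-(1/2:ℝ)) := Real.rpow_nonneg h1.le _
    rw [Real.norm_eq_abs, Real.norm_eq_abs, abs_of_nonneg (mul_nonneg hnn hnn'),
      abs_of_nonneg hnn]
    calc (t-s) ^ (-(1/2:ℝ)) * (1+s) ^ (-(1/2:ℝ)) ≤ (t-s) ^ (-(1/2:ℝ)) * 1 := by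
          exact mul_le_mul_of_nonneg_left hb hnn
      _ = (t-s) ^ (-(1/2:ℝ)) := mul_one _

private lemma integral_g {t : ℝ} (ht : 0 < t) :
    ∫ s in Ioo (0:ℝ) t, (t-s) ^ (-(1/2:ℝ)) * (1+s) ^ (-(1/2:ℝ))
      = 2 * Real.arctan (Real.sqrt t) := by
  have hii : IntervalIntegrable
      (fun s => (t-s) ^ (-(1/2:ℝ)) * (1+s) ^ (-(1/2:ℝ))) volume 0 t := by
    rw [intervalIntegrable_iff_integrableOn_Ioc_of_le ht.le,
      integrableOn_Ioc_iff_integrableOn_Ioo]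
    exact integrableOn_g ht
  have hsqrtpos : 0 < Real.sqrt t := Real.sqrt_pos.2 ht
  have hval : ∫ s in (0:ℝ)..t, (t-s) ^ (-(1/2:ℝ)) * (1+s) ^ (-(1/2:ℝ))
      = π - 2 * (π/2 - Real.arctan (Real.sqrt t)) := by
    apply intervalIntegral.integral_eq_sub_of_hasDerivAt_of_tendsto ht
      (fun x hx => hasDerivAt_myF ht (by linarith [hx.1]) hx.2) hii
    · -- tendsto at 0 from the right
      have hc : ContinuousAt (fun s => 2 * Real.arctan (Real.sqrt ((1+s)/(t-s)))) 0 :=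
        (hasDerivAt_myF ht (by norm_num) ht).continuousAt
      have h0 : (fun s => 2 * Real.arctan (Real.sqrt ((1+s)/(t-s)))) 0
          = 2 * (π/2 - Real.arctan (Real.sqrt t)) := by
        have : ((1:ℝ)+0)/(t-0) = t⁻¹ := by simp [one_div]
        simp only [this, Real.sqrt_inv, Real.arctan_inv_of_pos hsqrtpos]
      rw [← h0]
      exact hc.continuousWithinAt
    · -- tendsto at t from the left
      have hts : Tendsto (fun s : ℝ => t - s) (nhdsWithin t (Iio t)) (nhdsWithin 0 (Ioi 0)) := by
        apply tendsto_nhdsWithin_of_tendsto_nhds_of_eventually_within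
        · have : Tendsto (fun s : ℝ => t - s) (nhds t) (nhds (t - t)) :=
            (continuous_const.sub continuous_id).tendsto t
          simpa using this.mono_left nhdsWithin_le_nhds
        · exact eventually_nhdsWithin_of_forall fun s hs => mem_Ioi.2 (sub_pos.2 hs)
      have hinv : Tendsto (fun s : ℝ => (t - s)⁻¹) (nhdsWithin t (Iio t)) atTop :=
        tendsto_inv_nhdsGT_zero.comp hts
      have hnum : Tendsto (fun s : ℝ => 1 + s) (nhdsWithin t (Iio t)) (nhds (1 + t)) :=
        ((continuous_const.add continuous_id).tendsto t).mono_left nhdsWithin_le_nhds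
      have hu : Tendsto (fun s : ℝ => (1+s)/(t-s)) (nhdsWithin t (Iio t)) atTop := by
        simp only [div_eq_mul_inv]
        exact hnum.pos_mul_atTop (by linarith) hinv
      have hsqrt : Tendsto Real.sqrt atTop atTop := by
        rw [show Real.sqrt = fun x : ℝ => x ^ (1/2:ℝ) from funext Real.sqrt_eq_rpow]
        exact tendsto_rpow_atTop (by norm_num)
      have harctan : Tendsto (fun s : ℝ => Real.arctan (Real.sqrt ((1+s)/(t-s))))
          (nhdsWithin t (Iio t)) (nhds (π/2)) :=
        (tendsto_nhds_of_tendsto_nhdsWithin Real.tendsto_arctan_atTop).comp (hsqrt.comp hu)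
      have := harctan.const_mul 2
      simpa [mul_div_cancel₀] using this
  rw [← MeasureTheory.integral_Ioc_eq_integral_Ioo, ← intervalIntegral.integral_of_le ht.le,
    hval]
  ring

end aux

theorem time_integral_no_cancellation (q M : ℝ) (hq : 0 ≤ q) (hM : 0 < M) :
    ∃ C > 0, ∀ t : ℝ, 0 < t → ∀ w : ℝ, w ≤ 0 →
      t ^ (-(1/2:ℝ)) *
        (∫ s in Set.Ioo (0:ℝ) t,
          (t - s) ^ (-(1/2:ℝ)) * (1 + s) ^ (-(1/2:ℝ)) *
            Real.exp (-(w - q*(t-s))^2 / (M*t))) ≤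
      C * (1 + t) ^ (-(1/2:ℝ)) * Real.exp (-w^2 / (M*t)) := by
  refine ⟨8, by norm_num, ?_⟩
  intro t ht w hw
  set E := Real.exp (-w^2 / (M*t)) with hE
  have hEpos : 0 < E := Real.exp_pos _
  have hMt : 0 < M * t := mul_pos hM ht
  -- step 1: bound the integral
  have hI : (∫ s in Set.Ioo (0:ℝ) t,
        (t - s) ^ (-(1/2:ℝ)) * (1 + s) ^ (-(1/2:ℝ)) *
          Real.exp (-(w - q*(t-s))^2 / (M*t)))
      ≤ 2 * Real.arctan (Real.sqrt t) * E := by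
    have hle : (∫ s in Set.Ioo (0:ℝ) t,
          (t - s) ^ (-(1/2:ℝ)) * (1 + s) ^ (-(1/2:ℝ)) *
            Real.exp (-(w - q*(t-s))^2 / (M*t)))
        ≤ ∫ s in Set.Ioo (0:ℝ) t,
            (t - s) ^ (-(1/2:ℝ)) * (1 + s) ^ (-(1/2:ℝ)) * E := by
      apply integral_mono_of_nonneg
      · filter_upwards [ae_restrict_mem measurableSet_Ioo] with s hs
        have h1 : (0:ℝ) < 1 + s := by linarith [hs.1]
        have h2 : (0:ℝ) < t - s := by linarith [hs.2]
        exact mul_nonneg (mul_nonneg (Real.rpow_nonneg h2.le _) (Real.rpow_nonneg h1.le _))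
          (Real.exp_pos _).le
      · exact (integrableOn_g ht).mul_const E
      · filter_upwards [ae_restrict_mem measurableSet_Ioo] with s hs
        have h1 : (0:ℝ) < 1 + s := by linarith [hs.1]
        have h2 : (0:ℝ) < t - s := by linarith [hs.2]
        have hexp : Real.exp (-(w - q*(t-s))^2 / (M*t)) ≤ E := by
          rw [hE]
          apply Real.exp_le_exp.2
          apply (div_le_div_iff_of_pos_right hMt).2
          nlinarith [mul_nonneg (mul_nonneg hq h2.le) (neg_nonneg.2 hw), sq_nonneg (q*(t-s))]
        exact mul_le_mul_of_nonneg_left hexp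
          (mul_nonneg (Real.rpow_nonneg h2.le _) (Real.rpow_nonneg h1.le _))
    calc _ ≤ _ := hle
      _ = (∫ s in Set.Ioo (0:ℝ) t, (t - s) ^ (-(1/2:ℝ)) * (1 + s) ^ (-(1/2:ℝ))) * E :=
        integral_mul_const E _
      _ = 2 * Real.arctan (Real.sqrt t) * E := by rw [integral_g ht]
  -- step 2: arithmetic
  have ha : 0 < Real.sqrt t := Real.sqrt_pos.2 ht
  have hb : 0 < Real.sqrt (1+t) := Real.sqrt_pos.2 (by linarith)
  have ha2 : Real.sqrt t ^ 2 = t := Real.sq_sqrt ht.le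
  have hb2 : Real.sqrt (1+t) ^ 2 = 1 + t := Real.sq_sqrt (by linarith)
  have hr0 : 0 ≤ Real.arctan (Real.sqrt t) := by
    rw [← Real.arctan_zero]
    exact Real.arctan_strictMono.monotone ha.le
  have hmain : 2 * Real.arctan (Real.sqrt t) / Real.sqrt t ≤ 8 / Real.sqrt (1+t) := by
    rw [div_le_div_iff₀ ha hb]
    rcases le_total (Real.sqrt t) 1 with hc | hc
    · have hble : Real.sqrt (1+t) ≤ 2 := by nlinarith
      have har : Real.arctan (Real.sqrt t) ≤ Real.sqrt t := arctan_le_self' ha.le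
      nlinarith [mul_le_mul hble har hr0 (by norm_num : (0:ℝ) ≤ 2)]
    · have hble : Real.sqrt (1+t) ≤ 2 * Real.sqrt t := by nlinarith
      have har : Real.arctan (Real.sqrt t) ≤ 2 := by
        have := Real.arctan_lt_pi_div_two (Real.sqrt t)
        nlinarith [Real.pi_lt_d2]
      nlinarith [mul_le_mul hble har hr0 (by positivity : (0:ℝ) ≤ 2 * Real.sqrt t)]
  rw [rpow_neg_half_eq t ht.le, rpow_neg_half_eq (1+t) (by linarith)]
  calc (Real.sqrt t)⁻¹ * (∫ s in Set.Ioo (0:ℝ) t,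
          (t - s) ^ (-(1/2:ℝ)) * (1 + s) ^ (-(1/2:ℝ)) *
            Real.exp (-(w - q*(t-s))^2 / (M*t)))
      ≤ (Real.sqrt t)⁻¹ * (2 * Real.arctan (Real.sqrt t) * E) :=
        mul_le_mul_of_nonneg_left hI (inv_nonneg.2 ha.le)
    _ = (2 * Real.arctan (Real.sqrt t) / Real.sqrt t) * E := by ring
    _ ≤ (8 / Real.sqrt (1+t)) * E := mul_le_mul_of_nonneg_right hmain hEpos.le
    _ = 8 * (Real.sqrt (1+t))⁻¹ * E := by ring
end

section
/- Let a > 0, M > 0, and η > 0. There exist constants C, η₁, η₂ > 0 such that for all y ≤ 0 and all t > 0: errfn( (−y − at)/(M√t) ) · e^{−η|y|} ≤ C e^{−η₁|y|} · e^{−η₂ t}. -/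
open MeasureTheory Set

noncomputable def errfn (z : ℝ) : ℝ :=
  (1 / (2 * Real.pi)) * ∫ ξ in Set.Iic z, Real.exp (-ξ^2)

lemma errfn_aux_int : Integrable (fun ξ : ℝ => Real.exp (-ξ^2)) := by
  have := integrable_exp_neg_mul_sq (b := 1) one_pos
  simpa using this

lemma errfn_aux_int2 : Integrable (fun ξ : ℝ => Real.exp (-(1/2 : ℝ) * ξ^2)) :=
  integrable_exp_neg_mul_sq (by norm_num)

lemma sqrt_two_pi_le : Real.sqrt (2 * Real.pi) ≤ 2 * Real.pi := by
  nlinarith [Real.sq_sqrt (by positivity : (0:ℝ) ≤ 2 * Real.pi),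
    Real.sqrt_nonneg (2 * Real.pi), Real.pi_gt_three,
    sq_nonneg (Real.sqrt (2 * Real.pi) - 1)]

lemma errfn_le_one (z : ℝ) : errfn z ≤ 1 := by
  have hπ : 0 < Real.pi := Real.pi_pos
  have h1 : ∫ ξ in Set.Iic z, Real.exp (-ξ^2) ≤ ∫ ξ : ℝ, Real.exp (-ξ^2) :=
    setIntegral_le_integral errfn_aux_int
      (Filter.Eventually.of_forall fun x => (Real.exp_pos _).le)
  have h2 : ∫ ξ : ℝ, Real.exp (-ξ^2) = Real.sqrt Real.pi := by
    have := integral_gaussian (1 : ℝ)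
    simpa using this
  rw [errfn]
  rw [h2] at h1
  have h3 : Real.sqrt Real.pi ≤ 2 * Real.pi := by
    nlinarith [Real.sq_sqrt hπ.le, Real.sqrt_nonneg Real.pi, Real.pi_gt_three]
  rw [div_mul_eq_mul_div, one_mul, div_le_one (by linarith)]
  linarith

lemma errfn_le_exp (z : ℝ) (hz : z ≤ 0) : errfn z ≤ Real.exp (-(z^2)/2) := by
  have hπ : 0 < Real.pi := Real.pi_pos
  have hstep1 : ∫ ξ in Set.Iic z, Real.exp (-ξ^2)
      ≤ ∫ ξ in Set.Iic z, Real.exp (-(z^2)/2) * Real.exp (-(1/2 : ℝ) * ξ^2) := by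
    apply setIntegral_mono_on
    · exact errfn_aux_int.integrableOn
    · exact (errfn_aux_int2.const_mul _).integrableOn
    · exact measurableSet_Iic
    · intro x hx
      simp only [Set.mem_Iic] at hx
      rw [← Real.exp_add]
      apply Real.exp_le_exp.mpr
      nlinarith [sq_nonneg (x - z), sq_nonneg (x + z)]
  have hstep2 : ∫ ξ in Set.Iic z, Real.exp (-(z^2)/2) * Real.exp (-(1/2 : ℝ) * ξ^2)
      ≤ Real.exp (-(z^2)/2) * Real.sqrt (2 * Real.pi) := by
    rw [integral_const_mul]
    apply mul_le_mul_of_nonneg_left _ (Real.exp_pos _).le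
    have h1 : ∫ ξ in Set.Iic z, Real.exp (-(1/2 : ℝ) * ξ^2)
        ≤ ∫ ξ : ℝ, Real.exp (-(1/2 : ℝ) * ξ^2) :=
      setIntegral_le_integral errfn_aux_int2
        (Filter.Eventually.of_forall fun x => (Real.exp_pos _).le)
    have h2 : ∫ ξ : ℝ, Real.exp (-(1/2 : ℝ) * ξ^2) = Real.sqrt (2 * Real.pi) := by
      rw [integral_gaussian]
      rw [show Real.pi / (1/2) = 2 * Real.pi by ring]
    linarith [h1, h2.le, h2.ge]
  rw [errfn]
  have hle : (1 / (2 * Real.pi)) * (Real.exp (-(z^2)/2) * Real.sqrt (2 * Real.pi))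
      ≤ Real.exp (-(z^2)/2) := by
    rw [div_mul_eq_mul_div, one_mul, div_le_iff₀ (by linarith)]
    exact mul_le_mul_of_nonneg_left sqrt_two_pi_le (Real.exp_pos _).le
  calc (1 / (2 * Real.pi)) * ∫ ξ in Set.Iic z, Real.exp (-ξ^2)
      ≤ (1 / (2 * Real.pi)) * (Real.exp (-(z^2)/2) * Real.sqrt (2 * Real.pi)) := by
        apply mul_le_mul_of_nonneg_left _ (by positivity)
        linarith
    _ ≤ _ := hle

theorem errfn_localized_decay (a M η : ℝ)
    (ha : 0 < a) (hM : 0 < M) (hη : 0 < η) :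
    ∃ C > 0, ∃ η₁ > 0, ∃ η₂ > 0, ∀ y : ℝ, y ≤ 0 → ∀ t : ℝ, 0 < t →
      errfn ((-y - a*t) / (M * Real.sqrt t)) * Real.exp (-η * |y|) ≤
        C * Real.exp (-η₁ * |y|) * Real.exp (-η₂ * t) := by
  refine ⟨1, one_pos, η/2, by positivity,
    min (a^2/(8*M^2)) (η*a/4), lt_min (by positivity) (by positivity), ?_⟩
  intro y hy t ht
  set z := (-y - a*t) / (M * Real.sqrt t) with hz
  have habs : |y| = -y := abs_of_nonpos hy
  have hst : 0 < Real.sqrt t := Real.sqrt_pos.mpr ht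
  have hMs : 0 < M * Real.sqrt t := by positivity
  have hη₂t : min (a^2/(8*M^2)) (η*a/4) * t ≤ (a^2/(8*M^2)) * t :=
    mul_le_mul_of_nonneg_right (min_le_left _ _) ht.le
  have hη₂t' : min (a^2/(8*M^2)) (η*a/4) * t ≤ (η*a/4) * t :=
    mul_le_mul_of_nonneg_right (min_le_right _ _) ht.le
  rcases le_or_gt (-y) (a*t/2) with h1 | h2
  · -- small |y| : use Gaussian decay in t
    have hzn : z * (M * Real.sqrt t) ≤ -(a*t/2) := by
      rw [hz, div_mul_cancel₀ _ hMs.ne']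
      linarith
    have hq0 : -(a*t/2) ≤ 0 := by nlinarith
    have hz0 : z ≤ 0 := by nlinarith [hMs, hzn]
    have hsq : (a*t/2)^2 ≤ (z*(M*Real.sqrt t))^2 := by
      nlinarith [mul_nonneg (by linarith : (0:ℝ) ≤ -(a*t/2) - z*(M*Real.sqrt t))
        (by linarith : (0:ℝ) ≤ (a*t/2) - z*(M*Real.sqrt t))]
    have hzsq : a^2*t ≤ 4*M^2*z^2 := by
      have ht2 : Real.sqrt t * Real.sqrt t = t := Real.mul_self_sqrt ht.le
      have h3 : z^2*M^2*(Real.sqrt t*Real.sqrt t) = z^2*M^2*t := by rw [ht2]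
      rw [← mul_le_mul_iff_of_pos_right ht]
      nlinarith [hsq, h3]
    have hkey : min (a^2/(8*M^2)) (η*a/4) * t ≤ z^2/2 := by
      refine le_trans hη₂t ?_
      rw [div_mul_eq_mul_div, div_le_div_iff₀ (by positivity) two_pos]
      nlinarith [hzsq]
    have h1' : errfn z ≤ Real.exp (-(z^2)/2) := errfn_le_exp z hz0
    have h2' : Real.exp (-(z^2)/2) ≤ Real.exp (-(min (a^2/(8*M^2)) (η*a/4)) * t) := by
      apply Real.exp_le_exp.mpr
      linarith [hkey]
    have h3' : Real.exp (-η * |y|) ≤ Real.exp (-(η/2) * |y|) := by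
      apply Real.exp_le_exp.mpr
      nlinarith [abs_nonneg y]
    calc errfn z * Real.exp (-η * |y|)
        ≤ Real.exp (-(min (a^2/(8*M^2)) (η*a/4)) * t) * Real.exp (-(η/2) * |y|) := by
          apply mul_le_mul (h1'.trans h2') h3' (Real.exp_pos _).le (Real.exp_pos _).le
      _ = 1 * Real.exp (-(η/2) * |y|) * Real.exp (-(min (a^2/(8*M^2)) (η*a/4)) * t) := by
          ring
  · -- large |y| : use exponential decay in |y|
    have hbig : a*t/2 ≤ |y| := by rw [habs]; linarith
    have h1' : errfn z ≤ 1 := errfn_le_one z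
    have h2' : Real.exp (-η * |y|) ≤
        Real.exp (-(η/2) * |y|) * Real.exp (-(min (a^2/(8*M^2)) (η*a/4)) * t) := by
      rw [← Real.exp_add]
      apply Real.exp_le_exp.mpr
      have : (η/2) * (a*t/2) ≤ (η/2) * |y| :=
        mul_le_mul_of_nonneg_left hbig (by positivity)
      nlinarith [hη₂t']
    calc errfn z * Real.exp (-η * |y|)
        ≤ 1 * (Real.exp (-(η/2) * |y|) * Real.exp (-(min (a^2/(8*M^2)) (η*a/4)) * t)) :=
          mul_le_mul h1' h2' (Real.exp_pos _).le one_pos.le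
      _ = 1 * Real.exp (-(η/2) * |y|) * Real.exp (-(min (a^2/(8*M^2)) (η*a/4)) * t) := by
          ring
end
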